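/- arXiv:2401.08260 — 2 statements merged into one kernel-verified Lean document; each statement's English description precedes it below -/
import Mathlib

section
/- Let d ≥ 2 and σ > 0, and let f_σ : ℝ → ℝ be f_σ(x) = ∑_{n=0}^∞ ((-1)ⁿ √π Γ((2n+d)/2) / (2ⁿ σ^{2n} n! Γ(d/2) Γ((2n+1)/2))) x^{2n}, i.e., f_σ(x) = ₁F₁(d/2; 1/2; -x²/(2σ²)). Then for all x, y ∈ ℝ^d, ∫_{S^{d-1}} f_σ(⟨ξ, x - y⟩) dU(ξ) = exp(-‖x - y‖² / (2σ²)), where U is the uniform (normalized rotation-invariant) probability measure on the unit sphere S^{d-1} ⊆ ℝ^d. That is, the d-dimensional Gaussian kernel is the sliced version of the one-dimensional kernel k(s,t) = f_σ(|s-t|). -/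
open MeasureTheory Metric
open scoped RealInnerProductSpace

/-- The uniform (normalized rotation-invariant) probability measure on the unit sphere
`S^{d-1} ⊆ ℝ^d`, obtained by normalizing the surface measure. -/
noncomputable def uniformSphere (d : ℕ) :
    Measure (sphere (0 : EuclideanSpace ℝ (Fin d)) 1) :=
  ((volume : Measure (EuclideanSpace ℝ (Fin d))).toSphere Set.univ)⁻¹ •
    (volume : Measure (EuclideanSpace ℝ (Fin d))).toSphere

section Aux
open Set
open scoped RealInnerProductSpace

noncomputable def Ival (m : ℕ) : ℝ := ∫ r in Set.Ioi (0:ℝ), r ^ m * Real.exp (-r^2/2)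

lemma Ival_eq (m : ℕ) :
    Ival m = 2 ^ (((m:ℝ) - 1)/2) * Real.Gamma (((m:ℝ)+1)/2) := by
  have h := integral_rpow_mul_exp_neg_mul_rpow (p := 2) (q := (m:ℝ)) (b := 1/2)
    two_pos (lt_of_lt_of_le neg_one_lt_zero (Nat.cast_nonneg m)) (by norm_num)
  have h2 : ∀ x : ℝ, (1/2:ℝ) ^ x * (1/2) = 2 ^ (-x + -1) := by
    intro x
    have : (1/2:ℝ) = 2 ^ (-1:ℝ) := by rw [Real.rpow_neg_one]; norm_num
    rw [this, ← Real.rpow_mul (by norm_num), ← Real.rpow_add two_pos]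
    norm_num
  rw [Ival, show (∫ r in Set.Ioi (0:ℝ), r ^ m * Real.exp (-r^2/2))
      = ∫ x in Set.Ioi (0:ℝ), x ^ (m:ℝ) * Real.exp (- (1/2) * x ^ (2:ℝ)) from ?_, h,
      h2, show -(-((m:ℝ)+1)/2) + -1 = ((m:ℝ)-1)/2 by ring]
  refine setIntegral_congr_fun measurableSet_Ioi (fun x hx => ?_)
  rw [Real.rpow_natCast, Real.rpow_two]
  ring_nf

lemma Ival_pos (m : ℕ) : 0 < Ival m := by
  rw [Ival_eq]
  exact mul_pos (Real.rpow_pos_of_pos two_pos _) (Real.Gamma_pos_of_pos (by positivity))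

lemma lineJ (m : ℕ) : (∫ s : ℝ, s ^ (2*m) * Real.exp (-s^2/2)) = 2 * Ival (2*m) := by
  rw [Ival, ← integral_comp_abs (f := fun t => t ^ (2*m) * Real.exp (-t^2/2))]
  congr 1 with s
  simp [pow_mul, sq_abs]

lemma polar_eq (d : ℕ) (hd : 1 ≤ d) (H : EuclideanSpace ℝ (Fin d) → ℝ)
    (g : Metric.sphere (0 : EuclideanSpace ℝ (Fin d)) 1 → ℝ) (k : ℝ → ℝ)
    (hH : ∀ (ξ : Metric.sphere (0 : EuclideanSpace ℝ (Fin d)) 1) (r : ℝ), 0 < r →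
      H (r • (ξ : EuclideanSpace ℝ (Fin d))) = g ξ * k r) :
    (∫ w, H w) = (∫ ξ, g ξ ∂((volume : Measure (EuclideanSpace ℝ (Fin d))).toSphere)) *
      ∫ r in Set.Ioi (0:ℝ), r ^ (d - 1) * k r := by
  have hdim : Module.finrank ℝ (EuclideanSpace ℝ (Fin d)) = d := finrank_euclideanSpace_fin
  haveI : Nontrivial (EuclideanSpace ℝ (Fin d)) :=
    Module.nontrivial_of_finrank_pos (R := ℝ) (by rw [hdim]; omega)
  set F : Metric.sphere (0 : EuclideanSpace ℝ (Fin d)) 1 × Set.Ioi (0:ℝ) → ℝ :=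
    fun p => g p.1 * k p.2 with hF
  have e1 : (∫ x : ({0}ᶜ : Set (EuclideanSpace ℝ (Fin d))), H x
        ∂((volume : Measure (EuclideanSpace ℝ (Fin d))).comap Subtype.val))
      = ∫ w, H w := by
    rw [integral_subtype_comap (measurableSet_singleton 0).compl,
      restrict_compl_singleton]
  have e2 : (∫ x : ({0}ᶜ : Set (EuclideanSpace ℝ (Fin d))),
        F (homeomorphUnitSphereProd (EuclideanSpace ℝ (Fin d)) x)
        ∂((volume : Measure (EuclideanSpace ℝ (Fin d))).comap Subtype.val))
      = ∫ y, F y ∂((volume : Measure (EuclideanSpace ℝ (Fin d))).toSphere.prod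
          (Measure.volumeIoiPow (Module.finrank ℝ (EuclideanSpace ℝ (Fin d)) - 1))) :=
    (Measure.measurePreserving_homeomorphUnitSphereProd
      (volume : Measure (EuclideanSpace ℝ (Fin d)))).integral_comp
      (Homeomorph.measurableEmbedding _) F
  have e3 : ∀ x : ({0}ᶜ : Set (EuclideanSpace ℝ (Fin d))),
      F (homeomorphUnitSphereProd (EuclideanSpace ℝ (Fin d)) x) = H x := by
    rintro ⟨x, hx⟩
    have hx0 : x ≠ 0 := hx
    have hn : (0:ℝ) < ‖x‖ := norm_pos_iff.2 hx0
    have hcoe : (((homeomorphUnitSphereProd (EuclideanSpace ℝ (Fin d)) ⟨x, hx⟩).1 :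
        Metric.sphere (0 : EuclideanSpace ℝ (Fin d)) 1) : EuclideanSpace ℝ (Fin d))
        = ‖x‖⁻¹ • x := one_smul ℝ _
    have := hH (homeomorphUnitSphereProd (EuclideanSpace ℝ (Fin d)) ⟨x, hx⟩).1 ‖x‖ hn
    rw [hcoe, smul_inv_smul₀ hn.ne'] at this
    simpa [hF] using this.symm
  have e4 : (∫ r : Set.Ioi (0:ℝ), k r ∂(Measure.volumeIoiPow (d - 1)))
      = ∫ r in Set.Ioi (0:ℝ), r ^ (d - 1) * k r := by
    simp only [Measure.volumeIoiPow, ENNReal.ofReal]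
    rw [integral_withDensity_eq_integral_smul
      ((measurable_subtype_coe.pow_const _).real_toNNReal),
      integral_subtype_comap measurableSet_Ioi
        (fun a : ℝ => Real.toNNReal (a ^ (d-1)) • k a)]
    refine setIntegral_congr_fun measurableSet_Ioi (fun a ha => ?_)
    rw [NNReal.smul_def, Real.coe_toNNReal _ (pow_nonneg (le_of_lt ha) _), smul_eq_mul]
  calc (∫ w, H w)
      = ∫ x : ({0}ᶜ : Set (EuclideanSpace ℝ (Fin d))), H x
          ∂((volume : Measure (EuclideanSpace ℝ (Fin d))).comap Subtype.val) := e1.symm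
    _ = ∫ x : ({0}ᶜ : Set (EuclideanSpace ℝ (Fin d))),
          F (homeomorphUnitSphereProd (EuclideanSpace ℝ (Fin d)) x)
          ∂((volume : Measure (EuclideanSpace ℝ (Fin d))).comap Subtype.val) :=
        integral_congr_ae (Filter.Eventually.of_forall fun x => (e3 x).symm)
    _ = ∫ y, F y ∂((volume : Measure (EuclideanSpace ℝ (Fin d))).toSphere.prod
          (Measure.volumeIoiPow (Module.finrank ℝ (EuclideanSpace ℝ (Fin d)) - 1))) := e2
    _ = (∫ ξ, g ξ ∂((volume : Measure (EuclideanSpace ℝ (Fin d))).toSphere)) *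
          ∫ r : Set.Ioi (0:ℝ), k r
            ∂(Measure.volumeIoiPow (Module.finrank ℝ (EuclideanSpace ℝ (Fin d)) - 1)) :=
        integral_prod_mul g (fun r : Set.Ioi (0:ℝ) => k r)
    _ = _ := by rw [hdim, e4]

lemma gauss_coord (d n : ℕ) (hd : 0 < d) :
    (∫ x : EuclideanSpace ℝ (Fin d), (x ⟨0, hd⟩) ^ (2*n) * Real.exp (-‖x‖^2/2))
      = (2 * Ival (2*n)) * (2 * Ival 0)^(d-1) := by
  set i0 : Fin d := ⟨0, hd⟩
  have h1 : (∫ x : EuclideanSpace ℝ (Fin d), (x i0) ^ (2*n) * Real.exp (-‖x‖^2/2))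
      = ∫ y : Fin d → ℝ, (y i0) ^ (2*n) * Real.exp (-(∑ i, (y i)^2)/2) := by
    rw [← ((EuclideanSpace.volume_preserving_symm_measurableEquiv_toLp (Fin d)).symm).integral_comp
      (MeasurableEquiv.measurableEmbedding _)
      (fun x : EuclideanSpace ℝ (Fin d) => (x i0) ^ (2*n) * Real.exp (-‖x‖^2/2))]
    refine integral_congr_ae (Filter.Eventually.of_forall fun y => ?_)
    have hnorm : ‖(MeasurableEquiv.toLp 2 (Fin d → ℝ)) y‖^2 = ∑ i, (y i)^2 := by
      rw [EuclideanSpace.norm_eq, Real.sq_sqrt (by positivity)]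
      simp [sq_abs]
    show ((MeasurableEquiv.toLp 2 (Fin d → ℝ)) y) i0 ^ (2*n) *
        Real.exp (-‖(MeasurableEquiv.toLp 2 (Fin d → ℝ)) y‖^2/2) = _
    rw [hnorm]
    rfl
  have h2 : ∀ y : Fin d → ℝ, (y i0) ^ (2*n) * Real.exp (-(∑ i, (y i)^2)/2)
      = ∏ i, ((if i = i0 then (y i)^(2*n) else 1) * Real.exp (-(y i)^2/2)) := by
    intro y
    rw [Finset.prod_mul_distrib, Finset.prod_ite_eq' Finset.univ i0 (fun i => (y i)^(2*n)),
      ← Real.exp_sum]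
    simp only [Finset.mem_univ, if_true]
    congr 1
    rw [← Finset.sum_div]
    congr 1
    simp
  have h3 : (∫ y : Fin d → ℝ, ∏ i, ((if i = i0 then (y i)^(2*n) else 1) * Real.exp (-(y i)^2/2)))
      = ∏ i, ∫ s : ℝ, (if i = i0 then s^(2*n) else 1) * Real.exp (-s^2/2) :=
    MeasureTheory.integral_fintype_prod_eq_prod
      (fun i s => (if i = i0 then s^(2*n) else 1) * Real.exp (-s^2/2))
  have h4 : ∀ i : Fin d, (∫ s : ℝ, (if i = i0 then s^(2*n) else 1) * Real.exp (-s^2/2))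
      = if i = i0 then 2 * Ival (2*n) else 2 * Ival 0 := by
    intro i
    by_cases h : i = i0 <;> simp only [h, if_true, if_false]
    · exact lineJ n
    · simpa using lineJ 0
  rw [h1]
  rw [show (∫ y : Fin d → ℝ, (y i0) ^ (2*n) * Real.exp (-(∑ i, (y i)^2)/2))
      = ∫ y : Fin d → ℝ, ∏ i, ((if i = i0 then (y i)^(2*n) else 1) * Real.exp (-(y i)^2/2))
    from integral_congr_ae (Filter.Eventually.of_forall fun y => h2 y), h3]
  simp_rw [h4]
  rw [← Finset.mul_prod_erase Finset.univ _ (Finset.mem_univ i0), if_pos rfl]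
  congr 1
  rw [Finset.prod_congr rfl (fun x hx => if_neg (Finset.ne_of_mem_erase hx)),
    Finset.prod_const, Finset.card_erase_of_mem (Finset.mem_univ i0), Finset.card_univ,
    Fintype.card_fin]

lemma gauss_moment (d n : ℕ) (hd : 0 < d) (u : EuclideanSpace ℝ (Fin d)) (hu : ‖u‖ = 1) :
    (∫ w : EuclideanSpace ℝ (Fin d), ⟪w, u⟫ ^ (2*n) * Real.exp (-‖w‖^2/2))
      = (2 * Ival (2*n)) * (2 * Ival 0)^(d-1) := by
  set i0 : Fin d := ⟨0, hd⟩
  have hcard : Module.finrank ℝ (EuclideanSpace ℝ (Fin d)) = Fintype.card (Fin d) := by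
    rw [finrank_euclideanSpace_fin, Fintype.card_fin]
  have horth : Orthonormal ℝ (({i0} : Set (Fin d)).restrict (fun _ => u)) := by
    constructor
    · intro i
      simp [Set.restrict, hu]
    · intro i j hij
      exact absurd (Subtype.ext (by
        have hi := i.2; have hj := j.2
        simp only [Set.mem_singleton_iff] at hi hj
        rw [hi, hj])) hij
  obtain ⟨b, hb⟩ := horth.exists_orthonormalBasis_extension_of_card_eq hcard
  have hbu : b i0 = u := hb i0 rfl
  have h1 : (∫ w : EuclideanSpace ℝ (Fin d), ⟪w, u⟫ ^ (2*n) * Real.exp (-‖w‖^2/2))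
      = ∫ x : EuclideanSpace ℝ (Fin d), (x i0) ^ (2*n) * Real.exp (-‖x‖^2/2) := by
    rw [← b.measurePreserving_repr_symm.integral_comp
      (b.repr.symm.toHomeomorph.measurableEmbedding)
      (fun w : EuclideanSpace ℝ (Fin d) => ⟪w, u⟫ ^ (2*n) * Real.exp (-‖w‖^2/2))]
    refine integral_congr_ae (Filter.Eventually.of_forall fun x => ?_)
    show ⟪b.repr.symm x, u⟫ ^ (2*n) * Real.exp (-‖b.repr.symm x‖^2/2) = _
    have hin : ⟪b.repr.symm x, u⟫ = x i0 := by
      rw [← hbu, show b i0 = b.repr.symm (EuclideanSpace.single i0 (1:ℝ)) by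
          rw [← b.repr_self i0]; simp,
        b.repr.symm.inner_map_map, EuclideanSpace.inner_single_right]
      simp
    rw [hin, b.repr.symm.norm_map]
  rw [h1, gauss_coord d n hd]

lemma toSphere_moment (d n : ℕ) (hd : 0 < d) (u : EuclideanSpace ℝ (Fin d)) (hu : ‖u‖ = 1) :
    (∫ ξ : Metric.sphere (0 : EuclideanSpace ℝ (Fin d)) 1,
        ⟪(ξ : EuclideanSpace ℝ (Fin d)), u⟫ ^ (2*n)
        ∂((volume : Measure (EuclideanSpace ℝ (Fin d))).toSphere)) * Ival (2*n + d - 1)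
      = (2 * Ival (2*n)) * (2 * Ival 0)^(d-1) := by
  have key := polar_eq d hd
    (fun w => ⟪w, u⟫ ^ (2*n) * Real.exp (-‖w‖^2/2))
    (fun ξ => ⟪(ξ : EuclideanSpace ℝ (Fin d)), u⟫ ^ (2*n))
    (fun r => r ^ (2*n) * Real.exp (-r^2/2)) ?_
  · rw [← gauss_moment d n hd u hu, key]
    congr 1
    rw [Ival]
    refine setIntegral_congr_fun measurableSet_Ioi (fun r hr => ?_)
    show r ^ (2*n+d-1) * Real.exp (-r^2/2) = r ^ (d-1) * (r ^ (2*n) * Real.exp (-r^2/2))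
    rw [← mul_assoc, ← pow_add, show d - 1 + 2*n = 2*n + d - 1 by omega]
  · intro ξ r hr
    have hξ : ‖(ξ : EuclideanSpace ℝ (Fin d))‖ = 1 := by
      have := ξ.2
      rwa [Metric.mem_sphere, dist_zero_right] at this
    show ⟪r • (ξ : EuclideanSpace ℝ (Fin d)), u⟫ ^ (2*n) *
        Real.exp (-‖r • (ξ : EuclideanSpace ℝ (Fin d))‖^2/2) = _
    rw [real_inner_smul_left, norm_smul, hξ, mul_one, Real.norm_eq_abs,
      abs_of_pos hr, mul_pow]
    ring

lemma toSphere_total (d : ℕ) (hd : 0 < d) :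
    ((volume : Measure (EuclideanSpace ℝ (Fin d))).toSphere Set.univ).toReal * Ival (d-1)
      = (2 * Ival 0)^d := by
  have hu : ‖EuclideanSpace.single (⟨0,hd⟩ : Fin d) (1:ℝ)‖ = 1 := by
    rw [EuclideanSpace.norm_single]; norm_num
  have h := toSphere_moment d 0 hd _ hu
  simp only [Nat.mul_zero, pow_zero, Nat.zero_add] at h
  rw [integral_const, smul_eq_mul, mul_one, measureReal_def] at h
  rw [h, ← pow_succ']
  congr 1
  omega

lemma uniform_moment (d n : ℕ) (hd : 0 < d) (z : EuclideanSpace ℝ (Fin d)) :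
    (∫ ξ : Metric.sphere (0 : EuclideanSpace ℝ (Fin d)) 1,
        ⟪(ξ : EuclideanSpace ℝ (Fin d)), z⟫ ^ (2*n) ∂(uniformSphere d))
      = (Ival (2*n) * Ival (d-1) / (Ival 0 * Ival (2*n+d-1))) * ‖z‖^(2*n) := by
  have hT := toSphere_total d hd
  set T := ((volume : Measure (EuclideanSpace ℝ (Fin d))).toSphere Set.univ).toReal with hTdef
  have hTpos : 0 < T := by
    have h1 : (0:ℝ) < (2 * Ival 0)^d := by
      have := Ival_pos 0; positivity
    nlinarith [Ival_pos (d-1)]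
  rw [uniformSphere, integral_smul_measure, ENNReal.toReal_inv, smul_eq_mul, ← hTdef]
  rcases eq_or_ne z 0 with rfl | hz
  · rcases Nat.eq_zero_or_pos n with rfl | hn
    · simp only [inner_zero_right, Nat.mul_zero, pow_zero, integral_const, smul_eq_mul,
        mul_one, norm_zero]
      rw [measureReal_def, ← hTdef, inv_mul_cancel₀ hTpos.ne', show 2*0+d-1 = d-1 by omega]
      rw [div_self (mul_pos (Ival_pos 0) (Ival_pos (d-1))).ne']
    · have h2n : 2*n ≠ 0 := by omega
      simp [inner_zero_right, zero_pow h2n, norm_zero]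
  · set u := ‖z‖⁻¹ • z with hu_def
    have hu : ‖u‖ = 1 := norm_smul_inv_norm hz
    have hzu : ∀ ξ : Metric.sphere (0 : EuclideanSpace ℝ (Fin d)) 1,
        ⟪(ξ : EuclideanSpace ℝ (Fin d)), z⟫ ^ (2*n)
          = ‖z‖^(2*n) * ⟪(ξ : EuclideanSpace ℝ (Fin d)), u⟫ ^ (2*n) := by
      intro ξ
      rw [show z = ‖z‖ • u by rw [hu_def, smul_inv_smul₀ (norm_ne_zero_iff.2 hz)],
        real_inner_smul_right, mul_pow]
      rw [norm_smul, hu, mul_one, Real.norm_eq_abs, abs_of_pos (norm_pos_iff.2 hz)]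
    simp_rw [hzu]
    rw [integral_const_mul]
    have hS := toSphere_moment d n hd u hu
    set S := (∫ ξ : Metric.sphere (0 : EuclideanSpace ℝ (Fin d)) 1,
        ⟪(ξ : EuclideanSpace ℝ (Fin d)), u⟫ ^ (2*n)
        ∂((volume : Measure (EuclideanSpace ℝ (Fin d))).toSphere)) with hSdef
    have hpow : (2*Ival 0)^d = (2*Ival 0)*(2*Ival 0)^(d-1) := by
      rw [← pow_succ']; congr 1; omega
    have hT' : T = (2*Ival 0)*(2*Ival 0)^(d-1) / Ival (d-1) :=
      (eq_div_iff (Ival_pos (d-1)).ne').mpr (hT.trans hpow)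
    have hS' : S = (2*Ival (2*n)) * (2*Ival 0)^(d-1) / Ival (2*n+d-1) :=
      (eq_div_iff (Ival_pos (2*n+d-1)).ne').mpr hS
    rw [hT', hS']
    have p1 := Ival_pos (2*n); have p2 := Ival_pos (d-1)
    have p3 := Ival_pos 0; have p4 := Ival_pos (2*n+d-1)
    have p5 : (0:ℝ) < (2*Ival 0)^(d-1) := by positivity
    field_simp

lemma M_closed (d n : ℕ) (hd : 0 < d) :
    Ival (2*n) * Ival (d-1) / (Ival 0 * Ival (2*n+d-1))
      = Real.Gamma ((2*(n:ℝ)+1)/2) * Real.Gamma ((d:ℝ)/2) /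
        (Real.Gamma ((1:ℝ)/2) * Real.Gamma ((2*(n:ℝ)+(d:ℝ))/2)) := by
  have hc1 : ((2*n : ℕ) : ℝ) = 2*(n:ℝ) := by push_cast; ring
  have hc2 : ((d-1 : ℕ) : ℝ) = (d:ℝ) - 1 := by
    rw [Nat.cast_sub hd]; norm_num
  have hc3 : ((2*n+d-1 : ℕ) : ℝ) = 2*(n:ℝ) + (d:ℝ) - 1 := by
    rw [Nat.cast_sub (by omega : 1 ≤ 2*n+d)]; push_cast; ring
  rw [Ival_eq, Ival_eq, Ival_eq, Ival_eq, hc1, hc2, hc3]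
  rw [show ((d:ℝ)-1+1)/2 = (d:ℝ)/2 by ring,
    show (2*(n:ℝ)+(d:ℝ)-1+1)/2 = (2*(n:ℝ)+(d:ℝ))/2 by ring,
    show (((0:ℕ):ℝ)+1)/2 = (1:ℝ)/2 by norm_num]
  have g1 : 0 < Real.Gamma ((2*(n:ℝ)+1)/2) := Real.Gamma_pos_of_pos (by positivity)
  have g2 : 0 < Real.Gamma ((d:ℝ)/2) := Real.Gamma_pos_of_pos (by positivity)
  have g3 : 0 < Real.Gamma ((1:ℝ)/2) := Real.Gamma_pos_of_pos (by positivity)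
  have g4 : 0 < Real.Gamma ((2*(n:ℝ)+(d:ℝ))/2) := Real.Gamma_pos_of_pos (by positivity)
  have q1 : (0:ℝ) < 2 ^ ((2*(n:ℝ)-1)/2) := Real.rpow_pos_of_pos two_pos _
  have q2 : (0:ℝ) < 2 ^ (((d:ℝ)-1-1)/2) := Real.rpow_pos_of_pos two_pos _
  have q3 : (0:ℝ) < 2 ^ ((((0:ℕ):ℝ)-1)/2) := Real.rpow_pos_of_pos two_pos _
  have q4 : (0:ℝ) < 2 ^ ((2*(n:ℝ)+(d:ℝ)-1-1)/2) := Real.rpow_pos_of_pos two_pos _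
  rw [div_eq_div_iff (by positivity) (by positivity)]
  have h2 : (2:ℝ) ^ ((2*(n:ℝ)-1)/2) * 2 ^ (((d:ℝ)-1-1)/2)
      = 2 ^ ((((0:ℕ):ℝ)-1)/2) * 2 ^ ((2*(n:ℝ)+(d:ℝ)-1-1)/2) := by
    rw [← Real.rpow_add two_pos, ← Real.rpow_add two_pos]
    congr 1
    push_cast
    ring
  calc 2 ^ ((2*(n:ℝ)-1)/2) * Real.Gamma ((2*(n:ℝ)+1)/2) *
        (2 ^ (((d:ℝ)-1-1)/2) * Real.Gamma ((d:ℝ)/2)) *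
        (Real.Gamma ((1:ℝ)/2) * Real.Gamma ((2*(n:ℝ)+(d:ℝ))/2))
      = (2 ^ ((2*(n:ℝ)-1)/2) * 2 ^ (((d:ℝ)-1-1)/2)) *
        (Real.Gamma ((2*(n:ℝ)+1)/2) * Real.Gamma ((d:ℝ)/2) *
          (Real.Gamma ((1:ℝ)/2) * Real.Gamma ((2*(n:ℝ)+(d:ℝ))/2))) := by ring
    _ = (2 ^ ((((0:ℕ):ℝ)-1)/2) * 2 ^ ((2*(n:ℝ)+(d:ℝ)-1-1)/2)) *
        (Real.Gamma ((2*(n:ℝ)+1)/2) * Real.Gamma ((d:ℝ)/2) *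
          (Real.Gamma ((1:ℝ)/2) * Real.Gamma ((2*(n:ℝ)+(d:ℝ))/2))) := by rw [h2]
    _ = Real.Gamma ((2*(n:ℝ)+1)/2) * Real.Gamma ((d:ℝ)/2) *
        (2 ^ ((((0:ℕ):ℝ)-1)/2) * Real.Gamma ((1:ℝ)/2) *
          (2 ^ ((2*(n:ℝ)+(d:ℝ)-1-1)/2) * Real.Gamma ((2*(n:ℝ)+(d:ℝ))/2))) := by
        ring

noncomputable def coeffC (d : ℕ) (σ : ℝ) (n : ℕ) : ℝ :=
  (-1 : ℝ) ^ n * Real.sqrt Real.pi * Real.Gamma ((2 * (n : ℝ) + d) / 2) /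
    (2 ^ n * σ ^ (2 * n) * (n.factorial : ℝ) * Real.Gamma ((d : ℝ) / 2) *
      Real.Gamma ((2 * (n : ℝ) + 1) / 2))

lemma coeffC_abs (d : ℕ) (hd : 0 < d) (σ : ℝ) (hσ : 0 < σ) (n : ℕ) :
    |coeffC d σ n| = Real.sqrt Real.pi * Real.Gamma ((2 * (n : ℝ) + d) / 2) /
      (2 ^ n * σ ^ (2 * n) * (n.factorial : ℝ) * Real.Gamma ((d : ℝ) / 2) *
        Real.Gamma ((2 * (n : ℝ) + 1) / 2)) := by
  have g1 : 0 < Real.Gamma ((2 * (n : ℝ) + d) / 2) := Real.Gamma_pos_of_pos (by positivity)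
  have g2 : 0 < Real.Gamma ((d : ℝ) / 2) := Real.Gamma_pos_of_pos (by positivity)
  have g3 : 0 < Real.Gamma ((2 * (n : ℝ) + 1) / 2) := Real.Gamma_pos_of_pos (by positivity)
  have hfac : (0:ℝ) < (n.factorial : ℝ) := by exact_mod_cast n.factorial_pos
  have hpi : (0:ℝ) ≤ Real.sqrt Real.pi := Real.sqrt_nonneg _
  rw [coeffC, abs_div, abs_mul, abs_mul, abs_pow, abs_neg, abs_one, one_pow, one_mul,
    abs_of_nonneg hpi, abs_of_pos g1, abs_of_pos (by positivity)]

lemma coeffC_abs_succ (d : ℕ) (hd : 0 < d) (σ : ℝ) (hσ : 0 < σ) (n : ℕ) :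
    |coeffC d σ (n+1)| = |coeffC d σ n| *
      ((2 * (n:ℝ) + d) / (2 * σ^2 * ((n:ℝ)+1) * (2*(n:ℝ)+1))) := by
  rw [coeffC_abs d hd σ hσ, coeffC_abs d hd σ hσ]
  have e1 : (2 * ((n:ℝ)+1) + d) / 2 = (2 * (n:ℝ) + d) / 2 + 1 := by ring
  have e2 : (2 * ((n:ℝ)+1) + 1) / 2 = (2 * (n:ℝ) + 1) / 2 + 1 := by ring
  have hcast : ((n+1 : ℕ) : ℝ) = (n:ℝ) + 1 := by push_cast; ring
  rw [hcast, e1, e2,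
    Real.Gamma_add_one (by positivity : ((2*(n:ℝ)+d)/2 : ℝ) ≠ 0),
    Real.Gamma_add_one (by positivity : ((2*(n:ℝ)+1)/2 : ℝ) ≠ 0)]
  have hfaccast : ((n+1).factorial : ℝ) = ((n:ℝ)+1) * (n.factorial : ℝ) := by
    rw [Nat.factorial_succ]; push_cast; ring
  rw [hfaccast, pow_succ, show 2*(n+1) = 2*n+2 by ring, pow_add]
  have g1 : 0 < Real.Gamma ((2 * (n : ℝ) + d) / 2) := Real.Gamma_pos_of_pos (by positivity)
  have g2 : 0 < Real.Gamma ((d : ℝ) / 2) := Real.Gamma_pos_of_pos (by positivity)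
  have g3 : 0 < Real.Gamma ((2 * (n : ℝ) + 1) / 2) := Real.Gamma_pos_of_pos (by positivity)
  have hfac : (0:ℝ) < (n.factorial : ℝ) := by exact_mod_cast n.factorial_pos
  have h2n : (0:ℝ) < 2^n := by positivity
  have hσn : (0:ℝ) < σ^(2*n) := by positivity
  have hn1 : (0:ℝ) < (n:ℝ) + 1 := by positivity
  field_simp

lemma summable_coeff (d : ℕ) (hd : 0 < d) (σ : ℝ) (hσ : 0 < σ) (r : ℝ) :
    Summable (fun n => |coeffC d σ n| * r^(2*n)) := by
  apply summable_of_ratio_norm_eventually_le (r := 1/2) (by norm_num)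
  have hσ2 : (0:ℝ) < σ^2 := by positivity
  filter_upwards [Filter.eventually_ge_atTop (d + ⌈3*r^2/σ^2⌉₊ + 1)] with n hn
  have hnd : (d:ℝ) ≤ n := by exact_mod_cast (by omega : d ≤ n)
  have hnr : 3*r^2/σ^2 ≤ (n:ℝ) := by
    calc 3*r^2/σ^2 ≤ (⌈3*r^2/σ^2⌉₊ : ℝ) := Nat.le_ceil _
      _ ≤ n := by exact_mod_cast (by omega : ⌈3*r^2/σ^2⌉₊ ≤ n)
  have hn1 : (1:ℝ) ≤ n := by
    have : (1:ℕ) ≤ n := by omega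
    exact_mod_cast this
  have hc := coeffC_abs_succ d hd σ hσ n
  have hQ : (2 * (n:ℝ) + d) / (2 * σ^2 * ((n:ℝ)+1) * (2*(n:ℝ)+1)) * r^2 ≤ 1/2 := by
    rw [div_mul_eq_mul_div, div_le_iff₀ (by positivity)]
    have h3 : 3*r^2 ≤ σ^2 * n := by
      rw [div_le_iff₀ hσ2] at hnr
      linarith
    nlinarith [sq_nonneg r, mul_pos hσ2 (by positivity : (0:ℝ) < (n:ℝ))]
  have hrn : ∀ m : ℕ, (0:ℝ) ≤ r^(2*m) := fun m => (even_two_mul m).pow_nonneg r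
  have hnonneg : (0:ℝ) ≤ |coeffC d σ n| * r^(2*n) := mul_nonneg (abs_nonneg _) (hrn n)
  rw [Real.norm_eq_abs, Real.norm_eq_abs,
    abs_of_nonneg (mul_nonneg (abs_nonneg _) (hrn (n+1))),
    abs_of_nonneg hnonneg, hc, show 2*(n+1) = 2*n+2 by ring, pow_add]
  calc |coeffC d σ n| * ((2 * (n:ℝ) + d) / (2 * σ^2 * ((n:ℝ)+1) * (2*(n:ℝ)+1))) *
        (r^(2*n) * r^2)
      = (|coeffC d σ n| * r^(2*n)) *
        ((2 * (n:ℝ) + d) / (2 * σ^2 * ((n:ℝ)+1) * (2*(n:ℝ)+1)) * r^2) := by ring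
    _ ≤ (|coeffC d σ n| * r^(2*n)) * (1/2) := by
        apply mul_le_mul_of_nonneg_left hQ hnonneg
    _ = 1/2 * (|coeffC d σ n| * r^(2*n)) := by ring

lemma term_eq (d : ℕ) (hd : 0 < d) (σ : ℝ) (hσ : 0 < σ) (n : ℕ) (R : ℝ) :
    coeffC d σ n * ((Ival (2*n) * Ival (d-1) / (Ival 0 * Ival (2*n+d-1))) * R^(2*n))
      = ((n.factorial : ℝ))⁻¹ * (-R^2 / (2*σ^2))^n := by
  rw [M_closed d n hd, coeffC]
  have g1 : Real.Gamma ((2 * (n : ℝ) + d) / 2) ≠ 0 :=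
    (Real.Gamma_pos_of_pos (by positivity)).ne'
  have g2 : Real.Gamma ((d : ℝ) / 2) ≠ 0 := (Real.Gamma_pos_of_pos (by positivity)).ne'
  have g3 : Real.Gamma ((2 * (n : ℝ) + 1) / 2) ≠ 0 :=
    (Real.Gamma_pos_of_pos (by positivity)).ne'
  have g4 : Real.Gamma ((1:ℝ) / 2) ≠ 0 := (Real.Gamma_pos_of_pos (by positivity)).ne'
  have hfac : ((n.factorial : ℝ)) ≠ 0 := by
    exact_mod_cast n.factorial_ne_zero
  have hpi : Real.sqrt Real.pi = Real.Gamma ((1:ℝ)/2) := Real.Gamma_one_half_eq.symm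
  have hR : (-R^2 / (2*σ^2))^n = (-1)^n * R^(2*n) / (2^n * σ^(2*n)) := by
    rw [show -R^2/(2*σ^2) = (-1) * R^2 / (2*σ^2) by ring, div_pow, mul_pow, mul_pow,
      ← pow_mul, ← pow_mul]
  rw [hR, hpi]
  have h2n : ((2:ℝ))^n ≠ 0 := by positivity
  have hσn : (σ:ℝ)^(2*n) ≠ 0 := by positivity
  field_simp

end Aux

/-- The `d`-dimensional Gaussian kernel `exp(-‖x-y‖²/(2σ²))` is the sliced version of the
one-dimensional kernel given by the confluent hypergeometric function
`f_σ(x) = ₁F₁(d/2; 1/2; -x²/(2σ²))` (given here by its globally convergent power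
series). -/
theorem gaussian_kernel_sliced (d : ℕ) (hd : 2 ≤ d) (σ : ℝ) (hσ : 0 < σ)
    (f : ℝ → ℝ)
    (hf : ∀ x : ℝ, f x = ∑' n : ℕ,
      ((-1 : ℝ) ^ n * Real.sqrt Real.pi * Real.Gamma ((2 * (n : ℝ) + d) / 2) /
          (2 ^ n * σ ^ (2 * n) * (n.factorial : ℝ) * Real.Gamma ((d : ℝ) / 2) *
            Real.Gamma ((2 * (n : ℝ) + 1) / 2))) * x ^ (2 * n))
    (x y : EuclideanSpace ℝ (Fin d)) :
    (∫ ξ : sphere (0 : EuclideanSpace ℝ (Fin d)) 1,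
        f ⟪(ξ : EuclideanSpace ℝ (Fin d)), x - y⟫ ∂(uniformSphere d))
      = Real.exp (-‖x - y‖ ^ 2 / (2 * σ ^ 2)) := by
  have hd0 : 0 < d := by omega
  set z := x - y with hz
  have hcont : Continuous fun ξ : sphere (0 : EuclideanSpace ℝ (Fin d)) 1 =>
      (⟪(ξ : EuclideanSpace ℝ (Fin d)), z⟫ : ℝ) :=
    Continuous.inner continuous_subtype_val continuous_const
  haveI : IsFiniteMeasure (uniformSphere d) := by
    constructor
    rw [uniformSphere, Measure.smul_apply, smul_eq_mul]
    rcases eq_or_ne ((volume : Measure (EuclideanSpace ℝ (Fin d))).toSphere Set.univ) 0 with h | h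
    · simp [h]
    · rw [ENNReal.inv_mul_cancel h (measure_ne_top _ _)]
      exact ENNReal.one_lt_top
  set F : ℕ → sphere (0 : EuclideanSpace ℝ (Fin d)) 1 → ℝ :=
    fun n ξ => coeffC d σ n * ⟪(ξ : EuclideanSpace ℝ (Fin d)), z⟫ ^ (2*n) with hF
  have hbound : ∀ (n : ℕ) (ξ : sphere (0 : EuclideanSpace ℝ (Fin d)) 1),
      ‖F n ξ‖ ≤ |coeffC d σ n| * ‖z‖^(2*n) := by
    intro n ξ
    have hξ : ‖(ξ : EuclideanSpace ℝ (Fin d))‖ = 1 := by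
      have := ξ.2
      rwa [Metric.mem_sphere, dist_zero_right] at this
    rw [hF, Real.norm_eq_abs, abs_mul, abs_pow]
    refine mul_le_mul_of_nonneg_left (pow_le_pow_left₀ (abs_nonneg _) ?_ _) (abs_nonneg _)
    calc |⟪(ξ : EuclideanSpace ℝ (Fin d)), z⟫| ≤ ‖(ξ : EuclideanSpace ℝ (Fin d))‖ * ‖z‖ :=
        abs_real_inner_le_norm _ _
      _ = ‖z‖ := by rw [hξ, one_mul]
  have hFint : ∀ n, Integrable (F n) (uniformSphere d) := by
    intro n
    refine Integrable.mono' (integrable_const (|coeffC d σ n| * ‖z‖^(2*n)))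
      ((continuous_const.mul (hcont.pow _)).aestronglyMeasurable)
      (Filter.Eventually.of_forall (hbound n))
  have hsum : Summable (fun n => ∫ ξ, ‖F n ξ‖ ∂(uniformSphere d)) := by
    refine Summable.of_nonneg_of_le
      (fun n => integral_nonneg fun ξ => norm_nonneg _)
      (fun n => ?_)
      (((summable_coeff d hd0 σ hσ ‖z‖).mul_left
        ((uniformSphere d Set.univ).toReal)))
    calc (∫ ξ, ‖F n ξ‖ ∂(uniformSphere d))
        ≤ ∫ _ξ, |coeffC d σ n| * ‖z‖^(2*n) ∂(uniformSphere d) :=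
          integral_mono ((hFint n).norm) (integrable_const _) (hbound n)
      _ = (uniformSphere d Set.univ).toReal * (|coeffC d σ n| * ‖z‖^(2*n)) := by
          rw [integral_const, smul_eq_mul, measureReal_def]
  calc (∫ ξ : sphere (0 : EuclideanSpace ℝ (Fin d)) 1,
        f ⟪(ξ : EuclideanSpace ℝ (Fin d)), z⟫ ∂(uniformSphere d))
      = ∫ ξ : sphere (0 : EuclideanSpace ℝ (Fin d)) 1, ∑' n, F n ξ ∂(uniformSphere d) :=
        integral_congr_ae (Filter.Eventually.of_forall fun ξ => hf _)
    _ = ∑' n, ∫ ξ, F n ξ ∂(uniformSphere d) :=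
        (integral_tsum_of_summable_integral_norm hFint hsum).symm
    _ = ∑' n, ((n.factorial : ℝ))⁻¹ * (-‖z‖^2 / (2*σ^2))^n := by
        refine tsum_congr fun n => ?_
        rw [hF]
        rw [integral_const_mul, uniform_moment d n hd0 z, term_eq d hd0 σ hσ n ‖z‖]
    _ = Real.exp (-‖z‖^2 / (2*σ^2)) := by
        rw [Real.exp_eq_exp_ℝ, NormedSpace.exp_eq_tsum ℝ]
        refine tsum_congr fun n => ?_
        rw [smul_eq_mul]
end

section
/- Let d ≥ 2 and α > 0, and let f : ℝ_{≥0} → ℝ be f(x) = ∑_{n=0}^∞ ((-1)ⁿ αⁿ √π Γ((n+d)/2) / (n! Γ(d/2) Γ((n+1)/2))) xⁿ. Then this power series converges for every x ≥ 0, and for all x, y ∈ ℝ^d, ∫_{S^{d-1}} f(|⟨ξ, x - y⟩|) dU(ξ) = exp(-α ‖x - y‖), where U is the uniform (normalized rotation-invariant) probability measure on the unit sphere S^{d-1} ⊆ ℝ^d. That is, the d-dimensional Laplacian kernel exp(-α‖x-y‖) is the sliced version of the one-dimensional kernel k(s,t) = f(|s-t|). -/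
open MeasureTheory Metric
open scoped RealInnerProductSpace

section Aux

open Set

abbrev Esp (d : ℕ) : Type := EuclideanSpace ℝ (Fin d)

lemma gammaInt (m : ℕ) :
    ∫ r in Ioi (0:ℝ), r ^ m * Real.exp (-r ^ 2) = Real.Gamma (((m : ℝ) + 1) / 2) / 2 := by
  have h := integral_rpow_mul_exp_neg_rpow (p := 2) (q := (m : ℝ)) two_pos
    (lt_of_lt_of_le neg_one_lt_zero (Nat.cast_nonneg m))
  rw [show Real.Gamma (((m:ℝ)+1)/2)/2 = 1/2 * Real.Gamma (((m:ℝ)+1)/2) by ring, ← h]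
  refine setIntegral_congr_fun measurableSet_Ioi (fun x hx => ?_)
  have hx0 : (0:ℝ) ≤ x := le_of_lt hx
  rw [Real.rpow_natCast x m, show x ^ (2:ℝ) = x ^ (2:ℕ) by
    rw [← Real.rpow_natCast x 2]; norm_num]

lemma gammaInt1D (n : ℕ) :
    ∫ t : ℝ, |t| ^ n * Real.exp (-t ^ 2) = Real.Gamma (((n : ℝ) + 1) / 2) := by
  have : ∀ t : ℝ, |t| ^ n * Real.exp (-t ^ 2) = |t| ^ n * Real.exp (-|t| ^ 2) := by
    intro t; rw [sq_abs]
  rw [funext this, integral_comp_abs (f := fun s => s ^ n * Real.exp (-s ^ 2)), gammaInt]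
  ring

lemma gauss_pi (d n : ℕ) (i0 : Fin d) :
    ∫ y : Esp d, |y i0| ^ n * Real.exp (-‖y‖ ^ 2)
      = Real.Gamma (((n : ℝ) + 1) / 2) * Real.sqrt Real.pi ^ (d - 1) := by
  set F : Fin d → ℝ → ℝ := fun i t => (if i = i0 then |t| ^ n else 1) * Real.exp (-t ^ 2) with hFdef
  have key : ∫ y : Esp d, |y i0| ^ n * Real.exp (-‖y‖ ^ 2)
      = ∫ y : (Fin d) → ℝ, ∏ i, F i (y i) := by
    rw [← ((EuclideanSpace.volume_preserving_symm_measurableEquiv_toLp (Fin d)).symm).integral_comp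
      (MeasurableEquiv.measurableEmbedding _) (fun x : Esp d => |x i0| ^ n * Real.exp (-‖x‖ ^ 2))]
    refine integral_congr_ae (Filter.Eventually.of_forall fun y => ?_)
    have h1 : ((MeasurableEquiv.toLp 2 (Fin d → ℝ)).symm.symm y) i0 = y i0 := rfl
    have h2 : ‖(MeasurableEquiv.toLp 2 (Fin d → ℝ)).symm.symm y‖ ^ 2 = ∑ i, (y i) ^ 2 := by
      rw [EuclideanSpace.norm_eq, Real.sq_sqrt (by positivity)]
      refine Finset.sum_congr rfl fun i _ => by
        rw [show ((MeasurableEquiv.toLp 2 (Fin d → ℝ)).symm.symm y) i = y i from rfl,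
          Real.norm_eq_abs, sq_abs]
    simp only [h1, h2, hFdef]
    rw [Finset.prod_mul_distrib, Finset.prod_ite_eq' Finset.univ i0 (fun x => |y x| ^ n)]
    simp only [Finset.mem_univ, if_true]
    rw [← Real.exp_sum]
    congr 1
    rw [← Finset.sum_neg_distrib]
  rw [key, volume_pi, MeasureTheory.integral_fintype_prod_eq_prod (f := F)]
  have hval : ∀ i : Fin d, (∫ t, F i t) =
      if i = i0 then Real.Gamma (((n : ℝ) + 1) / 2) else Real.sqrt Real.pi := by
    intro i
    by_cases h : i = i0
    · simp only [hFdef, h, if_true]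
      exact gammaInt1D n
    · simp only [hFdef, h, if_false, one_mul]
      have := integral_gaussian 1
      simpa using this
  rw [Finset.prod_congr rfl (fun i _ => hval i)]
  rw [← Finset.mul_prod_erase Finset.univ _ (Finset.mem_univ i0)]
  simp only [if_true]
  congr 1
  rw [Finset.prod_congr rfl (fun i hi => if_neg (Finset.ne_of_mem_erase hi)),
    Finset.prod_const, Finset.card_erase_of_mem (Finset.mem_univ i0), Finset.card_univ,
    Fintype.card_fin]


lemma polar (d n : ℕ) (hd : 1 ≤ d) (v : Esp d) :
    ∫ x : Esp d, |⟪x, v⟫| ^ n * Real.exp (-‖x‖ ^ 2)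
      = (∫ θ : sphere (0 : Esp d) 1, |⟪(θ : Esp d), v⟫| ^ n
          ∂((volume : Measure (Esp d)).toSphere))
        * (Real.Gamma (((n : ℝ) + d) / 2) / 2) := by
  haveI : Nontrivial (Esp d) := by
    refine ⟨EuclideanSpace.single (⟨0, hd⟩ : Fin d) (1:ℝ), 0, ?_⟩
    intro h
    have := congrArg (fun w : Esp d => w (⟨0, hd⟩ : Fin d)) h
    simp [EuclideanSpace.single_apply] at this
  have hdim : Module.finrank ℝ (Esp d) = d := finrank_euclideanSpace_fin
  set μ : Measure (Esp d) := volume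
  set F : Esp d → ℝ := fun x => |⟪x, v⟫| ^ n * Real.exp (-‖x‖ ^ 2) with hF
  set g : sphere (0 : Esp d) 1 × Ioi (0:ℝ) → ℝ :=
    fun p => |⟪(p.1 : Esp d), v⟫| ^ n * ((p.2 : ℝ) ^ n * Real.exp (-(p.2:ℝ) ^ 2)) with hg
  have step1 : ∫ x, F x ∂μ = ∫ x : ({0}ᶜ : Set (Esp d)), F x.1 ∂(μ.comap (↑)) := by
    rw [integral_subtype_comap (measurableSet_singleton _).compl fun x ↦ F x,
      MeasureTheory.restrict_compl_singleton]
  have step2 : ∫ x : ({0}ᶜ : Set (Esp d)), F x.1 ∂(μ.comap (↑))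
      = ∫ p, g p ∂(μ.toSphere.prod (.volumeIoiPow (Module.finrank ℝ (Esp d) - 1))) := by
    rw [← μ.measurePreserving_homeomorphUnitSphereProd.integral_comp
      (Homeomorph.measurableEmbedding _) g]
    refine integral_congr_ae (Filter.Eventually.of_forall fun x => ?_)
    have hx : (x : Esp d) ≠ 0 := x.2
    have hnx : ‖(x : Esp d)‖ ≠ 0 := norm_ne_zero_iff.2 hx
    simp only [hg, hF, homeomorphUnitSphereProd_apply_fst_coe,
      homeomorphUnitSphereProd_apply_snd_coe]
    rw [real_inner_smul_left]
    rw [abs_mul, mul_pow, abs_inv, abs_norm, mul_mul_mul_comm, ← mul_pow,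
      inv_mul_cancel₀ hnx, one_pow, one_mul]
  have step3 : ∫ p, g p ∂(μ.toSphere.prod (.volumeIoiPow (Module.finrank ℝ (Esp d) - 1)))
      = (∫ θ : sphere (0 : Esp d) 1, |⟪(θ : Esp d), v⟫| ^ n ∂μ.toSphere)
        * ∫ r : Ioi (0:ℝ), (r:ℝ) ^ n * Real.exp (-(r:ℝ) ^ 2)
            ∂(Measure.volumeIoiPow (Module.finrank ℝ (Esp d) - 1)) :=
    integral_prod_mul (L := ℝ) (f := fun θ : sphere (0 : Esp d) 1 => |⟪(θ : Esp d), v⟫| ^ n)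
      (g := fun r : Ioi (0:ℝ) => (r:ℝ) ^ n * Real.exp (-(r:ℝ) ^ 2))
  have step4 : ∫ r : Ioi (0:ℝ), (r:ℝ) ^ n * Real.exp (-(r:ℝ) ^ 2)
        ∂(Measure.volumeIoiPow (Module.finrank ℝ (Esp d) - 1))
      = ∫ r in Ioi (0:ℝ), r ^ (d-1) * (r ^ n * Real.exp (-r ^ 2)) := by
    rw [Measure.volumeIoiPow, hdim]
    simp only [ENNReal.ofReal]
    rw [integral_withDensity_eq_integral_smul
      ((measurable_subtype_coe.pow_const _).real_toNNReal),
      integral_subtype_comap measurableSet_Ioi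
        (fun a : ℝ ↦ Real.toNNReal (a ^ (d-1)) • (a ^ n * Real.exp (-a ^ 2)))]
    refine setIntegral_congr_fun measurableSet_Ioi (fun x hx => ?_)
    rw [NNReal.smul_def, Real.coe_toNNReal _ (pow_nonneg (le_of_lt hx) _)]
    rfl
  have step5 : ∫ r in Ioi (0:ℝ), r ^ (d-1) * (r ^ n * Real.exp (-r ^ 2))
      = Real.Gamma (((n : ℝ) + d) / 2) / 2 := by
    have : ∀ r : ℝ, r ^ (d-1) * (r ^ n * Real.exp (-r ^ 2))
        = r ^ (n + d - 1) * Real.exp (-r ^ 2) := by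
      intro r
      rw [← mul_assoc, ← pow_add]
      congr 2
      omega
    simp_rw [this]
    rw [gammaInt (n + d - 1)]
    congr 2
    have : (n + d - 1 : ℕ) = (n + (d-1) : ℕ) := by omega
    rw [this]
    push_cast [Nat.cast_sub hd]
    ring
  rw [step1, step2, step3, step4, step5]


lemma gaussval (d n : ℕ) (hd : 1 ≤ d) (v : Esp d) :
    ∫ x : Esp d, |⟪x, v⟫| ^ n * Real.exp (-‖x‖ ^ 2)
      = ‖v‖ ^ n * Real.Gamma (((n : ℝ) + 1) / 2) * Real.sqrt Real.pi ^ (d - 1) := by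
  set i0 : Fin d := ⟨0, hd⟩
  by_cases hv : v = 0
  · subst hv
    rcases Nat.eq_zero_or_pos n with hn | hn
    · subst hn
      have : ∀ x : Esp d, |⟪x, (0 : Esp d)⟫| ^ 0 * Real.exp (-‖x‖ ^ 2)
          = |x i0| ^ 0 * Real.exp (-‖x‖ ^ 2) := by
        intro x; rw [pow_zero, pow_zero]
      rw [funext this, gauss_pi d 0 i0]
      simp
    · have : ∀ x : Esp d, |⟪x, (0 : Esp d)⟫| ^ n * Real.exp (-‖x‖ ^ 2) = 0 := by
        intro x
        rw [inner_zero_right, abs_zero, zero_pow hn.ne', zero_mul]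
      rw [funext this, integral_zero]
      rw [norm_zero, zero_pow hn.ne', zero_mul, zero_mul]
  · set u : Esp d := ‖v‖⁻¹ • v with hu
    have hun : ‖u‖ = 1 := norm_smul_inv_norm hv
    have horth : Orthonormal ℝ (({i0} : Set (Fin d)).restrict (fun _ => u)) := by
      constructor
      · intro i
        exact hun
      · intro i j hij
        exact absurd (Subtype.ext ((Set.mem_singleton_iff.mp i.2).trans
          (Set.mem_singleton_iff.mp j.2).symm)) hij
    obtain ⟨b, hb⟩ := horth.exists_orthonormalBasis_extension_of_card_eq
      (by simp [finrank_euclideanSpace_fin])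
    have hb0 : b i0 = u := hb i0 rfl
    have key : ∀ x : Esp d, |⟪x, v⟫| ^ n * Real.exp (-‖x‖ ^ 2)
        = ‖v‖ ^ n * (|(b.repr x) i0| ^ n * Real.exp (-‖b.repr x‖ ^ 2)) := by
      intro x
      have h1 : ⟪x, v⟫ = ‖v‖ * (b.repr x) i0 := by
        rw [OrthonormalBasis.repr_apply_apply, hb0, hu, real_inner_smul_left, ← mul_assoc,
          mul_inv_cancel₀ (norm_ne_zero_iff.2 hv), one_mul, real_inner_comm]
      rw [h1, abs_mul, abs_of_nonneg (norm_nonneg v), mul_pow,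
        b.repr.norm_map x]
      ring
    rw [funext key, integral_const_mul,
      b.measurePreserving_repr.integral_comp
        (b.repr.toHomeomorph.measurableEmbedding)
        (fun y : EuclideanSpace ℝ (Fin d) => |y i0| ^ n * Real.exp (-‖y‖ ^ 2)),
      gauss_pi d n i0]
    ring


lemma Gamma_arg_pos (d n : ℕ) (hd : 1 ≤ d) : 0 < Real.Gamma (((n : ℝ) + d) / 2) := by
  apply Real.Gamma_pos_of_pos
  have hd' : (1 : ℝ) ≤ (d : ℝ) := by exact_mod_cast hd
  positivity

lemma sphereInt (d n : ℕ) (hd : 1 ≤ d) (v : Esp d) :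
    ∫ θ : sphere (0 : Esp d) 1, |⟪(θ : Esp d), v⟫| ^ n ∂((volume : Measure (Esp d)).toSphere)
      = 2 * ‖v‖ ^ n * Real.Gamma (((n : ℝ) + 1) / 2) * Real.sqrt Real.pi ^ (d - 1)
          / Real.Gamma (((n : ℝ) + d) / 2) := by
  have h := polar d n hd v
  rw [gaussval d n hd v] at h
  have hG : Real.Gamma (((n : ℝ) + d) / 2) ≠ 0 := (Gamma_arg_pos d n hd).ne'
  field_simp at h ⊢
  linarith [h]

lemma sphereUniv (d : ℕ) (hd : 1 ≤ d) :
    (((volume : Measure (Esp d)).toSphere) Set.univ).toReal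
      = 2 * Real.sqrt Real.pi ^ d / Real.Gamma ((d : ℝ) / 2) := by
  have h := sphereInt d 0 hd (0 : Esp d)
  have h1 : ∀ θ : sphere (0 : Esp d) 1, |⟪(θ : Esp d), (0 : Esp d)⟫| ^ 0 = (1 : ℝ) := by
    intro θ; rw [pow_zero]
  rw [funext h1, integral_const, smul_eq_mul, mul_one] at h
  rw [← measureReal_def, h, pow_zero]
  have hsp : Real.sqrt Real.pi ^ d = Real.sqrt Real.pi * Real.sqrt Real.pi ^ (d - 1) := by
    conv_lhs => rw [show d = 1 + (d - 1) by omega]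
    rw [pow_add, pow_one]
  rw [hsp, show ((0:ℕ):ℝ) = 0 by norm_num, zero_add, zero_add, ← Real.Gamma_one_half_eq]
  ring

lemma sphereUniv_ne_zero (d : ℕ) (hd : 1 ≤ d) :
    ((volume : Measure (Esp d)).toSphere) Set.univ ≠ 0 := by
  intro h
  have h2 := sphereUniv d hd
  rw [h, ENNReal.toReal_zero] at h2
  have hG : 0 < Real.Gamma ((d : ℝ) / 2) := by
    apply Real.Gamma_pos_of_pos
    have hd' : (1 : ℝ) ≤ (d : ℝ) := by exact_mod_cast hd
    positivity
  have hs : 0 < Real.sqrt Real.pi := Real.sqrt_pos.mpr Real.pi_pos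
  have : 0 < 2 * Real.sqrt Real.pi ^ d / Real.Gamma ((d : ℝ) / 2) := by positivity
  linarith [this, h2.symm]

lemma uniformSphere_prob (d : ℕ) (hd : 1 ≤ d) :
    IsProbabilityMeasure (uniformSphere d) := by
  constructor
  rw [uniformSphere, Measure.smul_apply, smul_eq_mul, ENNReal.inv_mul_cancel
    (sphereUniv_ne_zero d hd) (measure_ne_top _ _)]

lemma moment (d n : ℕ) (hd : 1 ≤ d) (v : Esp d) :
    ∫ θ : sphere (0 : Esp d) 1, |⟪(θ : Esp d), v⟫| ^ n ∂(uniformSphere d)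
      = ‖v‖ ^ n * (Real.Gamma (((n : ℝ) + 1) / 2) * Real.Gamma ((d : ℝ) / 2))
          / (Real.sqrt Real.pi * Real.Gamma (((n : ℝ) + d) / 2)) := by
  rw [uniformSphere, integral_smul_measure, ENNReal.toReal_inv, sphereUniv d hd,
    sphereInt d n hd v, smul_eq_mul]
  have hG1 : 0 < Real.Gamma (((n : ℝ) + d) / 2) := Gamma_arg_pos d n hd
  have hG2 : 0 < Real.Gamma ((d : ℝ) / 2) := by
    apply Real.Gamma_pos_of_pos
    have hd' : (1 : ℝ) ≤ (d : ℝ) := by exact_mod_cast hd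
    positivity
  have hs : 0 < Real.sqrt Real.pi := Real.sqrt_pos.mpr Real.pi_pos
  have hsp : Real.sqrt Real.pi ^ d = Real.sqrt Real.pi * Real.sqrt Real.pi ^ (d - 1) := by
    conv_lhs => rw [show d = 1 + (d - 1) by omega]
    rw [pow_add, pow_one]
  rw [hsp]
  have hsd : (0:ℝ) < Real.sqrt Real.pi ^ (d-1) := by positivity
  field_simp


end Aux

section Aux2
open Set

lemma aux_summable {g : ℕ → ℝ} (hpos : ∀ n, 0 ≤ g n) {C : ℝ}
    (h : ∀ n : ℕ, ((n : ℝ) + 2) * g (n + 2) ≤ C * g n) : Summable g := by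
  have heven : Summable (fun k => g (2 * k)) := by
    refine summable_of_ratio_norm_eventually_le (r := 1/2) (by norm_num) ?_
    filter_upwards [Filter.eventually_ge_atTop ⌈C⌉₊] with k hk
    have hkC : C ≤ (k : ℝ) := le_trans (Nat.le_ceil C) (by exact_mod_cast hk)
    have h1 := h (2 * k)
    push_cast at h1
    rw [show 2 * (k + 1) = 2 * k + 2 by ring, Real.norm_eq_abs, Real.norm_eq_abs,
      abs_of_nonneg (hpos _), abs_of_nonneg (hpos _)]
    nlinarith [mul_le_mul_of_nonneg_right hkC (hpos (2 * k)), hpos (2 * k), hpos (2 * k + 2),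
      Nat.cast_nonneg (α := ℝ) k]
  have hodd : Summable (fun k => g (2 * k + 1)) := by
    refine summable_of_ratio_norm_eventually_le (r := 1/2) (by norm_num) ?_
    filter_upwards [Filter.eventually_ge_atTop ⌈C⌉₊] with k hk
    have hkC : C ≤ (k : ℝ) := le_trans (Nat.le_ceil C) (by exact_mod_cast hk)
    have h1 := h (2 * k + 1)
    push_cast at h1
    rw [show 2 * (k + 1) + 1 = (2 * k + 1) + 2 by ring, Real.norm_eq_abs, Real.norm_eq_abs,
      abs_of_nonneg (hpos _), abs_of_nonneg (hpos _)]
    nlinarith [mul_le_mul_of_nonneg_right hkC (hpos (2 * k + 1)), hpos (2 * k + 1),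
      hpos (2 * k + 3), Nat.cast_nonneg (α := ℝ) k]
  exact heven.even_add_odd hodd

lemma summable_K (d : ℕ) (hd : 1 ≤ d) (α : ℝ) (hα : 0 < α) (x : ℝ) (hx : 0 ≤ x) :
    Summable (fun n : ℕ =>
      ((-1 : ℝ) ^ n * α ^ n * Real.sqrt Real.pi * Real.Gamma (((n : ℝ) + d) / 2) /
          ((n.factorial : ℝ) * Real.Gamma ((d : ℝ) / 2) *
            Real.Gamma (((n : ℝ) + 1) / 2))) * x ^ n) := by
  have hd' : (1 : ℝ) ≤ (d : ℝ) := by exact_mod_cast hd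
  have hsπ : 0 < Real.sqrt Real.pi := Real.sqrt_pos.mpr Real.pi_pos
  have hGd : 0 < Real.Gamma ((d : ℝ) / 2) := Real.Gamma_pos_of_pos (by positivity)
  have hG1 : ∀ n : ℕ, 0 < Real.Gamma (((n : ℝ) + 1) / 2) := fun n =>
    Real.Gamma_pos_of_pos (by positivity)
  have hG2 : ∀ n : ℕ, 0 < Real.Gamma (((n : ℝ) + d) / 2) := fun n =>
    Real.Gamma_pos_of_pos (by positivity)
  set g : ℕ → ℝ := fun n =>
    (α ^ n * Real.sqrt Real.pi * Real.Gamma (((n : ℝ) + d) / 2) /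
        ((n.factorial : ℝ) * Real.Gamma ((d : ℝ) / 2) *
          Real.Gamma (((n : ℝ) + 1) / 2))) * x ^ n with hg
  have hgpos : ∀ n, 0 ≤ g n := by
    intro n
    have : (0:ℝ) < (n.factorial : ℝ) := by exact_mod_cast n.factorial_pos
    positivity
  have hrec : ∀ n : ℕ, g (n + 2)
      = g n * (α ^ 2 * x ^ 2 * (((n : ℝ) + d) / (((n : ℝ) + 1) ^ 2 * ((n : ℝ) + 2)))) := by
    intro n
    have e1 : (((n + 2 : ℕ) : ℝ) + d) / 2 = ((n : ℝ) + d) / 2 + 1 := by push_cast; ring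
    have e2 : (((n + 2 : ℕ) : ℝ) + 1) / 2 = ((n : ℝ) + 1) / 2 + 1 := by push_cast; ring
    have efac : (((n + 2).factorial : ℕ) : ℝ)
        = ((n : ℝ) + 2) * ((n : ℝ) + 1) * (n.factorial : ℝ) := by
      rw [Nat.factorial_succ, Nat.factorial_succ]
      push_cast; ring
    have hne1 : ((n : ℝ) + d) / 2 ≠ 0 := by positivity
    have hne2 : ((n : ℝ) + 1) / 2 ≠ 0 := by positivity
    simp only [hg]
    rw [e1, e2, Real.Gamma_add_one hne1, Real.Gamma_add_one hne2, efac]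
    have hfac : ((n.factorial : ℕ) : ℝ) ≠ 0 := by
      exact_mod_cast n.factorial_pos.ne'
    have h1 : ((n : ℝ) + 1) ≠ 0 := by positivity
    have h2 : ((n : ℝ) + 2) ≠ 0 := by positivity
    field_simp
    ring
  have hsum : Summable g := by
    refine aux_summable hgpos (C := ((d : ℝ) + 1) * α ^ 2 * x ^ 2) ?_
    intro n
    have key : ((n : ℝ) + 2) * (α ^ 2 * x ^ 2 * (((n : ℝ) + d) / (((n : ℝ) + 1) ^ 2 * ((n : ℝ) + 2))))
        ≤ ((d : ℝ) + 1) * α ^ 2 * x ^ 2 := by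
      have h1 : ((n : ℝ) + 1) ≠ 0 := by positivity
      have h2 : ((n : ℝ) + 2) ≠ 0 := by positivity
      have e : ((n : ℝ) + 2) * (α ^ 2 * x ^ 2 * (((n : ℝ) + d) / (((n : ℝ) + 1) ^ 2 * ((n : ℝ) + 2))))
          = α ^ 2 * x ^ 2 * (((n : ℝ) + d) / (((n : ℝ) + 1) ^ 2)) := by
        field_simp
      rw [e]
      have hdiv : ((n : ℝ) + d) / (((n : ℝ) + 1) ^ 2) ≤ (d : ℝ) + 1 := by
        rw [div_le_iff₀ (by positivity)]
        have hn0 : (0:ℝ) ≤ (n:ℝ) := Nat.cast_nonneg n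
        have hd0 : (0:ℝ) ≤ (d:ℝ) := Nat.cast_nonneg d
        nlinarith [mul_nonneg hd0 hn0, mul_nonneg hd0 (sq_nonneg (n:ℝ)), sq_nonneg (n:ℝ)]
      calc α ^ 2 * x ^ 2 * (((n : ℝ) + d) / (((n : ℝ) + 1) ^ 2))
          ≤ α ^ 2 * x ^ 2 * ((d : ℝ) + 1) := by
            apply mul_le_mul_of_nonneg_left hdiv (by positivity)
        _ = ((d : ℝ) + 1) * α ^ 2 * x ^ 2 := by ring
    calc ((n : ℝ) + 2) * g (n + 2)
        = g n * (((n : ℝ) + 2) * (α ^ 2 * x ^ 2 * (((n : ℝ) + d) / (((n : ℝ) + 1) ^ 2 * ((n : ℝ) + 2))))) := by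
          rw [hrec n]; ring
      _ ≤ g n * (((d : ℝ) + 1) * α ^ 2 * x ^ 2) := by
          apply mul_le_mul_of_nonneg_left key (hgpos n)
      _ = (((d : ℝ) + 1) * α ^ 2 * x ^ 2) * g n := by ring
  apply Summable.of_abs
  have : ∀ n : ℕ, |((-1 : ℝ) ^ n * α ^ n * Real.sqrt Real.pi * Real.Gamma (((n : ℝ) + d) / 2) /
          ((n.factorial : ℝ) * Real.Gamma ((d : ℝ) / 2) *
            Real.Gamma (((n : ℝ) + 1) / 2))) * x ^ n| = g n := by
    intro n
    have e : ((-1 : ℝ) ^ n * α ^ n * Real.sqrt Real.pi * Real.Gamma (((n : ℝ) + d) / 2) /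
          ((n.factorial : ℝ) * Real.Gamma ((d : ℝ) / 2) *
            Real.Gamma (((n : ℝ) + 1) / 2))) * x ^ n = (-1 : ℝ) ^ n * g n := by
      simp only [hg]; ring
    rw [e, abs_mul, abs_pow, abs_neg, abs_one, one_pow, one_mul, abs_of_nonneg (hgpos n)]
  rw [funext this]
  exact hsum


/-- The `d`-dimensional Laplacian kernel `exp(-α‖x-y‖)` is the sliced version of the
one-dimensional kernel with basis function
`f(x) = ∑ₙ ((-1)ⁿ αⁿ √π Γ((n+d)/2)/(n! Γ(d/2) Γ((n+1)/2))) xⁿ`; moreover this power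
series converges for every `x ≥ 0`. -/
theorem laplacian_kernel_sliced (d : ℕ) (hd : 2 ≤ d) (α : ℝ) (hα : 0 < α)
    (f : ℝ → ℝ)
    (hf : ∀ x : ℝ, f x = ∑' n : ℕ,
      ((-1 : ℝ) ^ n * α ^ n * Real.sqrt Real.pi * Real.Gamma (((n : ℝ) + d) / 2) /
          ((n.factorial : ℝ) * Real.Gamma ((d : ℝ) / 2) *
            Real.Gamma (((n : ℝ) + 1) / 2))) * x ^ n) :
    (∀ x : ℝ, 0 ≤ x → Summable (fun n : ℕ =>
      ((-1 : ℝ) ^ n * α ^ n * Real.sqrt Real.pi * Real.Gamma (((n : ℝ) + d) / 2) /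
          ((n.factorial : ℝ) * Real.Gamma ((d : ℝ) / 2) *
            Real.Gamma (((n : ℝ) + 1) / 2))) * x ^ n)) ∧
    ∀ x y : EuclideanSpace ℝ (Fin d),
      (∫ ξ : sphere (0 : EuclideanSpace ℝ (Fin d)) 1,
          f |⟪(ξ : EuclideanSpace ℝ (Fin d)), x - y⟫| ∂(uniformSphere d))
        = Real.exp (-α * ‖x - y‖) := by
  have hd1 : 1 ≤ d := le_trans one_le_two hd
  have hd' : (1 : ℝ) ≤ (d : ℝ) := by exact_mod_cast hd1
  have hsπ : 0 < Real.sqrt Real.pi := Real.sqrt_pos.mpr Real.pi_pos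
  have hGd : 0 < Real.Gamma ((d : ℝ) / 2) := Real.Gamma_pos_of_pos (by positivity)
  have hG1 : ∀ n : ℕ, 0 < Real.Gamma (((n : ℝ) + 1) / 2) := fun n =>
    Real.Gamma_pos_of_pos (by positivity)
  have hG2 : ∀ n : ℕ, 0 < Real.Gamma (((n : ℝ) + d) / 2) := fun n =>
    Real.Gamma_pos_of_pos (by positivity)
  haveI := uniformSphere_prob d hd1
  refine ⟨fun x hx => summable_K d hd1 α hα x hx, fun x y => ?_⟩
  set v : Esp d := x - y with hv
  set c : ℕ → ℝ := fun n =>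
    (-1 : ℝ) ^ n * α ^ n * Real.sqrt Real.pi * Real.Gamma (((n : ℝ) + d) / 2) /
        ((n.factorial : ℝ) * Real.Gamma ((d : ℝ) / 2) *
          Real.Gamma (((n : ℝ) + 1) / 2)) with hc
  set F : ℕ → sphere (0 : Esp d) 1 → ℝ := fun n θ => c n * |⟪(θ : Esp d), v⟫| ^ n with hF
  have hbound : ∀ n : ℕ, ∀ θ : sphere (0 : Esp d) 1, |⟪(θ : Esp d), v⟫| ≤ ‖v‖ := by
    intro n θ
    have h1 : |⟪(θ : Esp d), v⟫| ≤ ‖(θ : Esp d)‖ * ‖v‖ := abs_real_inner_le_norm _ _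
    rwa [mem_sphere_zero_iff_norm.mp θ.2, one_mul] at h1
  have hmeas : ∀ n : ℕ, AEStronglyMeasurable (F n) (uniformSphere d) := by
    intro n
    apply Continuous.aestronglyMeasurable
    exact continuous_const.mul ((continuous_abs.comp
      ((Continuous.inner continuous_subtype_val continuous_const))).pow n)
  have hint : ∀ n : ℕ, Integrable (F n) (uniformSphere d) := by
    intro n
    refine (integrable_const (|c n| * ‖v‖ ^ n)).mono' (hmeas n) ?_
    refine Filter.Eventually.of_forall fun θ => ?_
    simp only [hF, Real.norm_eq_abs, abs_mul, abs_pow, abs_abs]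
    exact mul_le_mul_of_nonneg_left
      (pow_le_pow_left₀ (abs_nonneg _) (hbound n θ) n) (abs_nonneg _)
  have habs : ∀ n : ℕ, |c n| = α ^ n * Real.sqrt Real.pi * Real.Gamma (((n : ℝ) + d) / 2) /
      ((n.factorial : ℝ) * Real.Gamma ((d : ℝ) / 2) * Real.Gamma (((n : ℝ) + 1) / 2)) := by
    intro n
    have hfac : (0:ℝ) < (n.factorial : ℝ) := by exact_mod_cast n.factorial_pos
    have e : c n = (-1 : ℝ) ^ n * (α ^ n * Real.sqrt Real.pi * Real.Gamma (((n : ℝ) + d) / 2) /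
      ((n.factorial : ℝ) * Real.Gamma ((d : ℝ) / 2) * Real.Gamma (((n : ℝ) + 1) / 2))) := by
      simp only [hc]; ring
    rw [e, abs_mul, abs_pow, abs_neg, abs_one, one_pow, one_mul, abs_of_nonneg (by positivity)]
  have hmom : ∀ n : ℕ, ∫ θ : sphere (0 : Esp d) 1, F n θ ∂(uniformSphere d)
      = (-(α * ‖v‖)) ^ n / (n.factorial : ℝ) := by
    intro n
    simp only [hF]
    rw [integral_const_mul, moment d n hd1 v]
    have hfac : (0:ℝ) < (n.factorial : ℝ) := by exact_mod_cast n.factorial_pos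
    rw [hc]
    have hvn : (0:ℝ) ≤ ‖v‖ := norm_nonneg v
    rw [neg_pow (α * ‖v‖) n, mul_pow]
    field_simp
  have hnormsum : Summable (fun n : ℕ => ∫ θ : sphere (0 : Esp d) 1, ‖F n θ‖ ∂(uniformSphere d)) := by
    have : ∀ n : ℕ, (∫ θ : sphere (0 : Esp d) 1, ‖F n θ‖ ∂(uniformSphere d))
        = (α * ‖v‖) ^ n / (n.factorial : ℝ) := by
      intro n
      have e : ∀ θ : sphere (0 : Esp d) 1, ‖F n θ‖ = |c n| * |⟪(θ : Esp d), v⟫| ^ n := by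
        intro θ
        simp only [hF, Real.norm_eq_abs, abs_mul, abs_pow, abs_abs]
      rw [funext e, integral_const_mul, moment d n hd1 v, habs n]
      have hfac : (0:ℝ) < (n.factorial : ℝ) := by exact_mod_cast n.factorial_pos
      rw [mul_pow]
      field_simp
    rw [funext this]
    exact Real.summable_pow_div_factorial (α * ‖v‖)
  have hswap := integral_tsum_of_summable_integral_norm hint hnormsum
  have hlhs : (∫ ξ : sphere (0 : Esp d) 1, f |⟪(ξ : Esp d), v⟫| ∂(uniformSphere d))
      = ∫ ξ : sphere (0 : Esp d) 1, (∑' n : ℕ, F n ξ) ∂(uniformSphere d) := by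
    refine integral_congr_ae (Filter.Eventually.of_forall fun θ => ?_)
    show f |⟪(θ : Esp d), v⟫| = ∑' n : ℕ, F n θ
    rw [hf]
  rw [hlhs, ← hswap]
  have : ∀ n : ℕ, (∫ θ : sphere (0 : Esp d) 1, F n θ ∂(uniformSphere d))
      = (-(α * ‖v‖)) ^ n / (n.factorial : ℝ) := hmom
  rw [funext this]
  rw [show -α * ‖v‖ = -(α * ‖v‖) by ring, Real.exp_eq_exp_ℝ, NormedSpace.exp_eq_tsum_div]

end Aux2
end
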